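/- Let k be an algebraically closed field of characteristic zero and R := k[[x,y]]/(x³ + xy³), the one-dimensional simple hypersurface singularity of type E₇. Let A := R/(x̄) where x̄ is the image of x, and let C be the cokernel of the R-linear map R² → R² given by (m,n) ↦ (x̄²m + x̄ȳn, x̄ȳ²m − x̄²n). Then Ext¹_R(A, A) = 0 and Ext¹_R(A, C) = 0. -/

import Mathlib

open CategoryTheory

set_option synthInstance.maxHeartbeats 1000000
set_option maxHeartbeats 1000000

/-- The first Ext group of two modules over a commutative ring. -/
noncomputable abbrev Ext1 (A : Type) [CommRing A] (M N : ModuleCat A) : Type :=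
  ((Ext A (ModuleCat A) 1).obj (Opposite.op M)).obj N

/-- `S = k[[x,y]]`, the formal power series ring in two variables. -/
abbrev PSring (k : Type) [Field k] : Type := MvPowerSeries (Fin 2) k

/-- `R = k[[x,y]]/(x³ + xy³)`, the `E₇` curve singularity. -/
abbrev E7 (k : Type) [Field k] : Type :=
  PSring k ⧸ Ideal.span
    {(MvPowerSeries.X 0 : PSring k) ^ 3 +
      (MvPowerSeries.X 0 : PSring k) * (MvPowerSeries.X 1 : PSring k) ^ 3}

/-- The image of `x` in `R`. -/
noncomputable abbrev xE7 (k : Type) [Field k] : E7 k :=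
  Ideal.Quotient.mk _ (MvPowerSeries.X 0 : PSring k)

/-- The image of `y` in `R`. -/
noncomputable abbrev yE7 (k : Type) [Field k] : E7 k :=
  Ideal.Quotient.mk _ (MvPowerSeries.X 1 : PSring k)

/-- The module `A = R/(x̄)`. -/
abbrev Amod (k : Type) [Field k] : Type := E7 k ⧸ Ideal.span {xE7 k}

/-- The presentation map `R² → R²`, `(m,n) ↦ (x̄²m + x̄ȳn, x̄ȳ²m − x̄²n)`. -/
noncomputable def presC (k : Type) [Field k] : (E7 k × E7 k) →ₗ[E7 k] (E7 k × E7 k) :=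
  LinearMap.prod
    ((xE7 k ^ 2) • LinearMap.fst (E7 k) (E7 k) (E7 k) +
      (xE7 k * yE7 k) • LinearMap.snd (E7 k) (E7 k) (E7 k))
    ((xE7 k * yE7 k ^ 2) • LinearMap.fst (E7 k) (E7 k) (E7 k) -
      (xE7 k ^ 2) • LinearMap.snd (E7 k) (E7 k) (E7 k))

/-- The module `C`, the cokernel of `presC`. -/
abbrev Cmod (k : Type) [Field k] : Type :=
  (E7 k × E7 k) ⧸ LinearMap.range (presC k)

section Aux

open MvPowerSeries Finsupp

variable (k : Type) [Field k]

noncomputable abbrev Fpoly : PSring k :=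
  (X 0 : PSring k) ^ 3 + (X 0 : PSring k) * (X 1 : PSring k) ^ 3

noncomputable abbrev Gpoly : PSring k :=
  (X 0 : PSring k) ^ 2 + (X 1 : PSring k) ^ 3

noncomputable abbrev gE7 : E7 k := xE7 k ^ 2 + yE7 k ^ 3

lemma mkG : Ideal.Quotient.mk _ (Gpoly k) = gE7 k := by
  simp [Gpoly, map_add, map_pow]

lemma X0_ne : (X 0 : PSring k) ≠ 0 := by
  intro h
  have := congrArg (coeff (single (0 : Fin 2) 1)) h
  rw [coeff_X, map_zero] at this
  simp at this

lemma G_ne : Gpoly k ≠ 0 := by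
  intro h
  have := congrArg (coeff (single (0 : Fin 2) 2)) h
  classical
  rw [map_zero, map_add, coeff_X_pow, coeff_X_pow, if_pos rfl,
    if_neg (by simp [Finsupp.single_eq_single_iff])] at this
  simp at this

lemma Sdvd (a : PSring k) (h : (X 0 : PSring k) ∣ Gpoly k * a) : (X 0 : PSring k) ∣ a := by
  have h1 : (X 0 : PSring k) ∣ (X 1 : PSring k) ^ 3 * a := by
    have e : (X 1 : PSring k) ^ 3 * a =
        Gpoly k * a - X 0 * (X 0 * a) := by ring
    rw [e]
    exact dvd_sub h ⟨X 0 * a, rfl⟩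
  rw [X_dvd_iff] at h1 ⊢
  intro m hm
  have h2 := h1 (m + single (1 : Fin 2) 3) (by simp [hm])
  classical
  rw [coeff_mul] at h2
  rw [Finset.sum_eq_single (single (1 : Fin 2) 3, m)] at h2
  · rwa [coeff_X_pow, if_pos rfl, one_mul] at h2
  · rintro ⟨u, v⟩ huv hne
    rw [Finset.HasAntidiagonal.mem_antidiagonal] at huv
    rw [coeff_X_pow]
    rw [if_neg, zero_mul]
    intro hu
    apply hne
    subst hu
    have : v = m := by
      have := huv
      rw [add_comm m] at this
      exact add_left_cancel this
    rw [this]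
  · intro hmem
    exact absurd (Finset.HasAntidiagonal.mem_antidiagonal.2 (add_comm _ _)) hmem

end Aux

section Quot

open MvPowerSeries

variable (k : Type) [Field k]

lemma F_eq : Fpoly k = (X 0 : PSring k) * Gpoly k := by ring

lemma hxg : xE7 k * gE7 k = 0 := by
  rw [← mkG, ← map_mul, ← F_eq, Ideal.Quotient.eq_zero_iff_mem]
  exact Ideal.subset_span rfl

lemma kerx (r : E7 k) (h : xE7 k * r = 0) : ∃ s, r = gE7 k * s := by
  obtain ⟨a, rfl⟩ := Ideal.Quotient.mk_surjective r
  rw [← map_mul, Ideal.Quotient.eq_zero_iff_mem, Ideal.mem_span_singleton] at h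
  obtain ⟨t, ht⟩ := h
  rw [show ((X 0 : PSring k) ^ 3 + X 0 * X 1 ^ 3) = X 0 * Gpoly k by ring, mul_assoc] at ht
  have ha : a = Gpoly k * t := mul_left_cancel₀ (X0_ne k) ht
  exact ⟨Ideal.Quotient.mk _ t, by rw [ha, map_mul, mkG]⟩

lemma kerg (r : E7 k) (h : gE7 k * r = 0) : ∃ s, r = xE7 k * s := by
  obtain ⟨a, rfl⟩ := Ideal.Quotient.mk_surjective r
  rw [← mkG, ← map_mul, Ideal.Quotient.eq_zero_iff_mem, Ideal.mem_span_singleton] at h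
  obtain ⟨t, ht⟩ := h
  rw [show ((X 0 : PSring k) ^ 3 + X 0 * X 1 ^ 3) * t = Gpoly k * (X 0 * t) by ring] at ht
  have ha : a = X 0 * t := mul_left_cancel₀ (G_ne k) ht
  exact ⟨Ideal.Quotient.mk _ t, by rw [ha, map_mul]⟩

lemma keyR (r : E7 k) (h : gE7 k * r ∈ Ideal.span {xE7 k}) : r ∈ Ideal.span {xE7 k} := by
  obtain ⟨a, rfl⟩ := Ideal.Quotient.mk_surjective r
  rw [Ideal.mem_span_singleton] at h ⊢
  obtain ⟨c, hc⟩ := h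
  obtain ⟨cs, rfl⟩ := Ideal.Quotient.mk_surjective c
  rw [← mkG, ← map_mul, ← map_mul] at hc
  rw [Ideal.Quotient.eq] at hc
  rw [Ideal.mem_span_singleton] at hc
  obtain ⟨t, ht⟩ := hc
  have hx : (X 0 : PSring k) ∣ Gpoly k * a := by
    refine ⟨cs + Gpoly k * t, ?_⟩
    linear_combination ht
  obtain ⟨a', ha'⟩ := Sdvd k a hx
  exact ⟨Ideal.Quotient.mk _ a', by rw [ha', map_mul]⟩

end Quot

section Res

variable (k : Type) [Field k]

/-- Multiplication by `r` as a morphism in `ModuleCat`. -/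
noncomputable def mulMap (r : E7 k) :
    ModuleCat.of (E7 k) (E7 k) ⟶ ModuleCat.of (E7 k) (E7 k) :=
  ModuleCat.ofHom (LinearMap.lsmul (E7 k) (E7 k) r)

lemma mulMap_comp (r s : E7 k) (h : r * s = 0) : mulMap k r ≫ mulMap k s = 0 := by
  apply ModuleCat.hom_ext
  apply LinearMap.ext
  intro m
  show s • (r • m) = (0 : E7 k)
  rw [smul_smul, smul_eq_mul, mul_comm s r, h, zero_mul]

/-- The scalar in degree `n` of the periodic resolution. -/
noncomputable def resScalar (n : ℕ) : E7 k := if Even n then xE7 k else gE7 k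

lemma resScalar_mul (n : ℕ) : resScalar k (n + 1) * resScalar k n = 0 := by
  rcases Nat.even_or_odd n with h | h
  · rw [resScalar, resScalar, if_pos h, if_neg (by simp [Nat.even_add_one, h])]
    rw [mul_comm]; exact hxg k
  · rw [resScalar, resScalar, if_neg (Nat.not_even_iff_odd.mpr h),
      if_pos (by rw [Nat.even_add_one]; exact Nat.not_even_iff_odd.mpr h)]
    exact hxg k

/-- The 2-periodic free resolution complex of `A`. -/
noncomputable def resComplex : ChainComplex (ModuleCat (E7 k)) ℕ :=
  ChainComplex.of (fun _ => ModuleCat.of (E7 k) (E7 k))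
    (fun n => mulMap k (resScalar k n))
    (fun n => mulMap_comp k _ _ (resScalar_mul k n))

lemma resComplex_d (n : ℕ) :
    (resComplex k).d (n + 1) n = mulMap k (resScalar k n) := by
  simp [resComplex, ChainComplex.of]

/-- The augmentation `R → A`. -/
noncomputable def resAug : ModuleCat.of (E7 k) (E7 k) ⟶ ModuleCat.of (E7 k) (Amod k) :=
  ModuleCat.ofHom (Ideal.span {xE7 k}).mkQ

lemma resAug_cond : (resComplex k).d 1 0 ≫ resAug k = 0 := by
  rw [resComplex_d]
  apply ModuleCat.hom_ext
  apply LinearMap.ext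
  intro m
  change E7 k at m
  show (Ideal.span {xE7 k}).mkQ (resScalar k 0 • m) = 0
  rw [Submodule.mkQ_apply, Submodule.Quotient.mk_eq_zero, Ideal.mem_span_singleton]
  refine ⟨m, ?_⟩
  rw [resScalar, if_pos (by simp), smul_eq_mul, mul_comm]

end Res

section Resolution

variable (k : Type) [Field k]

instance : CategoryTheory.Projective (ModuleCat.of (E7 k) (E7 k)) :=
  (IsProjective.iff_projective _).mp inferInstance

/-- The 2-periodic projective resolution of `A = R/(x)`. -/
noncomputable def resolution : ProjectiveResolution (ModuleCat.of (E7 k) (Amod k)) where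
  complex := resComplex k
  projective n := inferInstanceAs (CategoryTheory.Projective (ModuleCat.of (E7 k) (E7 k)))
  π := (ChainComplex.toSingle₀Equiv _ _).symm ⟨resAug k, resAug_cond k⟩
  quasiIso := ⟨fun n => by
    cases n with
    | zero =>
      rw [ChainComplex.quasiIsoAt₀_iff, ShortComplex.quasiIso_iff_of_zeros']
      rotate_left
      · rfl
      · rfl
      · rfl
      constructor
      · rw [ShortComplex.moduleCat_exact_iff]
        intro m hm
        change E7 k at m
        have hm' : (Ideal.span {xE7 k}).mkQ m = 0 := hm
        rw [Submodule.mkQ_apply, Submodule.Quotient.mk_eq_zero,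
          Ideal.mem_span_singleton] at hm'
        obtain ⟨c, hc⟩ := hm'
        refine ⟨c, ?_⟩
        show (resComplex k).d 1 0 c = m
        rw [resComplex_d]
        show resScalar k 0 * c = m
        rw [resScalar, if_pos (by simp), ← hc]
      · exact (ModuleCat.epi_iff_surjective _).mpr (Submodule.mkQ_surjective _)
    | succ n =>
      rw [quasiIsoAt_iff_exactAt']
      rotate_left
      · apply ChainComplex.exactAt_succ_single_obj
      rw [HomologicalComplex.exactAt_iff' _ (n+2) (n+1) n (by simp) (by simp)]
      rw [ShortComplex.moduleCat_exact_iff]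
      intro r hr
      change E7 k at r
      have hr' : resScalar k n * r = 0 := by
        have h0 : (resComplex k).d (n+1) n r = 0 := hr
        rw [resComplex_d] at h0
        exact h0
      rcases Nat.even_or_odd n with h | h
      · rw [resScalar, if_pos h] at hr'
        obtain ⟨s, hs⟩ := kerx k r hr'
        refine ⟨s, ?_⟩
        show (resComplex k).d (n+2) (n+1) s = r
        rw [resComplex_d]
        show resScalar k (n+1) * s = (r : E7 k)
        rw [resScalar, if_neg (by rw [Nat.even_add_one]; simpa using h)]
        exact hs.symm
      · rw [resScalar, if_neg (Nat.not_even_iff_odd.mpr h)] at hr'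
        obtain ⟨s, hs⟩ := kerg k r hr'
        refine ⟨s, ?_⟩
        show (resComplex k).d (n+2) (n+1) s = r
        rw [resComplex_d]
        show resScalar k (n+1) * s = (r : E7 k)
        rw [resScalar, if_pos (by rw [Nat.even_add_one]; exact Nat.not_even_iff_odd.mpr h)]
        exact hs.symm⟩

end Resolution

section Vanish

variable (k : Type) [Field k]

lemma subsingleton_of_isZero {R : Type} [Ring R] {M : ModuleCat R}
    (h : Limits.IsZero M) : Subsingleton M := by
  refine ⟨fun a b => ?_⟩
  have hid : 𝟙 M = 0 := h.eq_of_src _ _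
  have ha : a = 0 := by rw [← ModuleCat.id_apply M a, hid]; rfl
  have hb : b = 0 := by rw [← ModuleCat.id_apply M b, hid]; rfl
  rw [ha, hb]

lemma ext1_subsingleton (N : ModuleCat (E7 k))
    (hN : ∀ m : N, gE7 k • m = 0 → ∃ m' : N, m = xE7 k • m') :
    Subsingleton (((Ext (E7 k) (ModuleCat (E7 k)) 1).obj
      (Opposite.op (ModuleCat.of (E7 k) (Amod k)))).obj N) := by
  have hexact : ((resolution k).complex.linearYonedaObj (E7 k) N).ExactAt 1 := by
    rw [HomologicalComplex.exactAt_iff' _ 0 1 2 (by simp) (by simp)]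
    rw [ShortComplex.moduleCat_exact_iff]
    intro φ hφ
    change ModuleCat.of (E7 k) (E7 k) ⟶ N at φ
    have hφ' : (resComplex k).d (1+1) 1 ≫ φ = 0 := hφ
    have h2 : ((resComplex k).d (1+1) 1 ≫ φ) (1 : E7 k) = 0 := by rw [hφ']; rfl
    rw [resComplex_d] at h2
    have h3 : φ (resScalar k 1 • (1 : E7 k)) = 0 := h2
    rw [resScalar, if_neg (by decide)] at h3
    have h1 : gE7 k • φ (1 : E7 k) = 0 := by
      rw [← map_smul]; exact h3
    obtain ⟨m', hm'⟩ := hN (φ (1 : E7 k)) h1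
    refine ⟨(ModuleCat.ofHom (LinearMap.toSpanSingleton (E7 k) N m') :
      ModuleCat.of (E7 k) (E7 k) ⟶ N), ?_⟩
    show (resComplex k).d 1 0 ≫ _ = φ
    rw [resComplex_d]
    apply ModuleCat.hom_ext
    apply LinearMap.ext
    intro r
    change E7 k at r
    show (resScalar k 0 • r) • m' = φ r
    have hr : φ r = r • φ (1 : E7 k) := by
      conv_lhs => rw [show r = r • (1 : E7 k) by rw [smul_eq_mul, mul_one]]
      rw [map_smul]
    rw [hr, hm', resScalar, if_pos (by simp), smul_eq_mul, smul_smul]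
    rw [mul_comm (xE7 k) r]
  have hz : Limits.IsZero (((resolution k).complex.linearYonedaObj (E7 k) N).homology 1) :=
    (HomologicalComplex.exactAt_iff_isZero_homology _ _).mp hexact
  have e := (resolution k).isoExt (R := E7 k) 1 N
  exact subsingleton_of_isZero (hz.of_iso e)

end Vanish

section Keys

variable (k : Type) [Field k]

lemma keyA (m : ModuleCat.of (E7 k) (Amod k)) (hm : gE7 k • m = 0) :
    ∃ m', m = xE7 k • m' := by
  change Amod k at m
  obtain ⟨r, rfl⟩ := Submodule.Quotient.mk_surjective _ m
  refine ⟨0, ?_⟩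
  rw [smul_zero]
  rw [← Submodule.Quotient.mk_smul, Submodule.Quotient.mk_eq_zero] at hm
  rw [Submodule.Quotient.mk_eq_zero]
  exact keyR k r (by rwa [smul_eq_mul] at hm)

lemma keyC (m : ModuleCat.of (E7 k) (Cmod k)) (hm : gE7 k • m = 0) :
    ∃ m', m = xE7 k • m' := by
  change Cmod k at m
  obtain ⟨p, rfl⟩ := Submodule.Quotient.mk_surjective _ m
  rw [← Submodule.Quotient.mk_smul, Submodule.Quotient.mk_eq_zero] at hm
  obtain ⟨q, hq⟩ := hm
  have hq1 : xE7 k ^ 2 * q.1 + (xE7 k * yE7 k) * q.2 = gE7 k * p.1 := by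
    have := congrArg Prod.fst hq
    simpa [presC, smul_eq_mul, Prod.smul_def] using this
  have hq2 : (xE7 k * yE7 k ^ 2) * q.1 - xE7 k ^ 2 * q.2 = gE7 k * p.2 := by
    have := congrArg Prod.snd hq
    simpa [presC, smul_eq_mul, Prod.smul_def] using this
  have h1 : p.1 ∈ Ideal.span {xE7 k} := by
    apply keyR
    rw [Ideal.mem_span_singleton, ← hq1]
    exact dvd_add ⟨xE7 k * q.1, by ring⟩ ⟨yE7 k * q.2, by ring⟩
  have h2 : p.2 ∈ Ideal.span {xE7 k} := by
    apply keyR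
    rw [Ideal.mem_span_singleton, ← hq2]
    exact dvd_sub ⟨yE7 k ^ 2 * q.1, by ring⟩ ⟨xE7 k * q.2, by ring⟩
  rw [Ideal.mem_span_singleton] at h1 h2
  obtain ⟨a', ha⟩ := h1
  obtain ⟨b', hb⟩ := h2
  refine ⟨Submodule.Quotient.mk (a', b'), ?_⟩
  rw [← Submodule.Quotient.mk_smul]
  congr 1
  ext
  · simpa using ha
  · simpa using hb

end Keys

theorem statement14 (k : Type) [Field k] [IsAlgClosed k] [CharZero k] :
    Subsingleton (Ext1 (E7 k) (ModuleCat.of _ (Amod k)) (ModuleCat.of _ (Amod k))) ∧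
    Subsingleton (Ext1 (E7 k) (ModuleCat.of _ (Amod k)) (ModuleCat.of _ (Cmod k))) :=
  ⟨ext1_subsingleton k _ (keyA k), ext1_subsingleton k _ (keyC k)⟩
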